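/- Let q ∈ ℕ, 1 ≤ n ≤ q, and let {φ_k}_{k=1}^n ⊂ C[0,q]_Z be a T_Z-system. A polynomial p* ∈ L_n is a best uniform approximant of f ∈ C[0,q]_Z if and only if p* admits an alternance set of length n+1. -/

import Mathlib

namespace DiscPaper

/-- `ν` is a zero (of the first or second type) of the discrete function `f` on `[0,q]_ℤ`. -/
def IsZero (q : ℕ) (f : ℕ → ℝ) (ν : ℕ) : Prop :=
  (ν ≤ q ∧ f ν = 0) ∨ (1 ≤ ν ∧ ν ≤ q ∧ f (ν - 1) * f ν < 0)

/-- `N q f` is the number of zeros (of both types) of `f` on `[0,q]_ℤ`. -/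
noncomputable def N (q : ℕ) (f : ℕ → ℝ) : ℕ := {ν : ℕ | IsZero q f ν}.ncard

/-- `N₀ q f` is the number of zeros of the first type of `f` on `[0,q]_ℤ`. -/
noncomputable def N0 (q : ℕ) (f : ℕ → ℝ) : ℕ := {ν : ℕ | ν ≤ q ∧ f ν = 0}.ncard

/-- Number of sign changes of `g` on `[0,q]_ℤ`. -/
noncomputable def signChanges (q : ℕ) (g : ℕ → ℝ) : ℕ :=
  {ν : ℕ | 1 ≤ ν ∧ ν ≤ q ∧ g (ν - 1) * g ν < 0}.ncard

/-- `g` is obtained from `f` by replacing all its zero values on `[0,q]_ℤ` by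
arbitrary nonzero values. -/
def Admissible (q : ℕ) (f g : ℕ → ℝ) : Prop :=
  (∀ ν ≤ q, g ν ≠ 0) ∧ ∀ ν ≤ q, f ν ≠ 0 → g ν = f ν

/-- `S⁻(f)`: least number of sign changes over all admissible replacements. -/
noncomputable def Sminus (q : ℕ) (f : ℕ → ℝ) : ℕ :=
  sInf {s | ∃ g, Admissible q f g ∧ signChanges q g = s}

/-- `S⁺(f)`: largest number of sign changes over all admissible replacements. -/
noncomputable def Splus (q : ℕ) (f : ℕ → ℝ) : ℕ :=
  sSup {s | ∃ g, Admissible q f g ∧ signChanges q g = s}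
/-- The polynomial `Σ aₖ φₖ` with respect to the system `φ`. -/
noncomputable def poly (n : ℕ) (φ : Fin n → ℕ → ℝ) (a : Fin n → ℝ) : ℕ → ℝ :=
  fun ν => ∑ k, a k * φ k ν

/-- Linear independence of the discrete functions `φ₁,…,φₙ` on `[0,q]_ℤ`. -/
def LinIndepOn (q n : ℕ) (φ : Fin n → ℕ → ℝ) : Prop :=
  LinearIndependent ℝ (fun k : Fin n => fun ν : Fin (q + 1) => φ k ν)

/-- `{φₖ}` is a `T_ℤ`-system on `[0,q]_ℤ`: every nontrivial polynomial has at most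
`n - 1` zeros (of both types). -/
def IsTZ (q n : ℕ) (φ : Fin n → ℕ → ℝ) : Prop :=
  ∀ a : Fin n → ℝ, a ≠ 0 → N q (poly n φ a) ≤ n - 1

/-- The uniform norm of a discrete function on `[0,q]_ℤ`. -/
noncomputable def normZ (q : ℕ) (f : ℕ → ℝ) : ℝ :=
  (Finset.range (q + 1)).sup' (Finset.nonempty_range_iff.mpr q.succ_ne_zero)
    (fun ν => |f ν|)

/-- `poly n φ a` is a best uniform approximant of `f` from `L_n`. -/
noncomputable def IsBestApprox (q n : ℕ) (φ : Fin n → ℕ → ℝ) (f : ℕ → ℝ)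
    (a : Fin n → ℝ) : Prop :=
  ∀ b : Fin n → ℝ,
    normZ q (fun ν => f ν - poly n φ a ν) ≤ normZ q (fun ν => f ν - poly n φ b ν)

/-- The best approximant `poly n φ a` of `f` admits a Chebyshev alternance set of
length `n+1`. -/
noncomputable def HasAlternance (q n : ℕ) (φ : Fin n → ℕ → ℝ) (f : ℕ → ℝ)
    (a : Fin n → ℝ) : Prop :=
  ∃ ν : Fin (n + 1) → ℕ, StrictMono ν ∧ (∀ i, ν i ≤ q) ∧
    ∃ ε : ℝ, (ε = 1 ∨ ε = -1) ∧
      ∀ i : Fin (n + 1),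
        ε * (-1) ^ (i : ℕ) * (poly n φ a (ν i) - f (ν i)) =
          normZ q (fun μ => poly n φ a μ - f μ)

section Aux

variable {q n : ℕ} {φ : Fin n → ℕ → ℝ}

lemma poly_sub (a b : Fin n → ℝ) (x : ℕ) :
    poly n φ (a - b) x = poly n φ a x - poly n φ b x := by
  simp [poly, ← Finset.sum_sub_distrib, sub_mul]

lemma abs_le_normZ {f : ℕ → ℝ} {ν : ℕ} (h : ν ≤ q) : |f ν| ≤ normZ q f :=
  Finset.le_sup' (fun ν => |f ν|) (Finset.mem_range.mpr (Nat.lt_succ_of_le h))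

lemma normZ_nonneg (f : ℕ → ℝ) : (0:ℝ) ≤ normZ q f :=
  le_trans (abs_nonneg (f 0)) (abs_le_normZ (Nat.zero_le q))

lemma exists_abs_eq_normZ (f : ℕ → ℝ) : ∃ ν, ν ≤ q ∧ |f ν| = normZ q f := by
  obtain ⟨ν, hν, h⟩ := Finset.exists_mem_eq_sup'
    (Finset.nonempty_range_iff.mpr q.succ_ne_zero) (fun ν => |f ν|)
  exact ⟨ν, Nat.lt_succ_iff.mp (Finset.mem_range.mp hν), h.symm⟩

lemma normZ_congr {f g : ℕ → ℝ} (h : ∀ ν ≤ q, |f ν| = |g ν|) : normZ q f = normZ q g :=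
  Finset.sup'_congr _ rfl fun ν hν => h ν (Nat.lt_succ_iff.mp (Finset.mem_range.mp hν))

lemma normZ_lt {f : ℕ → ℝ} {c : ℝ} (h : ∀ ν ≤ q, |f ν| < c) : normZ q f < c :=
  (Finset.sup'_lt_iff _).mpr fun ν hν => h ν (Nat.lt_succ_iff.mp (Finset.mem_range.mp hν))

lemma finite_zeros (p : ℕ → ℝ) : {ν | IsZero q p ν}.Finite :=
  (Set.finite_Iic q).subset (fun ν hν => by
    rcases hν with ⟨h, _⟩ | ⟨_, h, _⟩ <;> exact h)

lemma le_N {m : ℕ} {p : ℕ → ℝ} (t : Fin m → ℕ) (ht : Function.Injective t)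
    (hz : ∀ i, IsZero q p (t i)) : m ≤ N q p := by
  have hsub : Set.range t ⊆ {ν | IsZero q p ν} := by rintro _ ⟨i, rfl⟩; exact hz i
  have h1 : (Set.range t).ncard = m := by
    rw [Set.ncard_eq_toFinset_card', Set.toFinset_range, Finset.card_image_of_injective _ ht,
      Finset.card_univ, Fintype.card_fin]
  calc m = (Set.range t).ncard := h1.symm
    _ ≤ _ := Set.ncard_le_ncard hsub (finite_zeros p)

/-- If a nontrivial polynomial has `n` distinct zeros, contradiction. -/
lemma no_n_zeros (hn : 1 ≤ n) (hTZ : IsTZ q n φ) {c : Fin n → ℝ} (hc : c ≠ 0)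
    (t : Fin n → ℕ) (ht : Function.Injective t)
    (hz : ∀ i, IsZero q (poly n φ c) (t i)) : False := by
  have h1 := le_N t ht hz
  have h2 := hTZ c hc
  omega

lemma exists_zero_between {p : ℕ → ℝ} {s t : ℕ} (hst : s < t) (ht : t ≤ q)
    (hsign : p s * p t < 0) : ∃ μ, s < μ ∧ μ ≤ t ∧ IsZero q p μ := by
  classical
  have hex : ∃ μ, s < μ ∧ μ ≤ t ∧ p s * p μ ≤ 0 := ⟨t, hst, le_rfl, le_of_lt hsign⟩
  set μ := Nat.find hex with hμdef
  obtain ⟨h1, h2, h3⟩ := Nat.find_spec hex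
  have hps : p s ≠ 0 := by
    intro h; rw [h, zero_mul] at hsign; exact lt_irrefl _ hsign
  have hprev : 0 < p s * p (μ - 1) := by
    rcases Nat.lt_or_ge s (μ - 1) with hlt | hge
    · by_contra hnp
      push_neg at hnp
      have := Nat.find_min hex (m := μ - 1) (by omega) ⟨hlt, by omega, hnp⟩
      exact this
    · have hs : μ - 1 = s := by omega
      rw [hs]
      have := mul_self_nonneg (p s)
      rcases lt_or_eq_of_le this with h | h
      · exact h
      · exact absurd h.symm (mul_ne_zero hps hps)
  rcases eq_or_ne (p μ) 0 with h0 | h0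
  · exact ⟨μ, h1, h2, Or.inl ⟨le_trans h2 ht, h0⟩⟩
  · have h3' : p s * p μ < 0 := lt_of_le_of_ne h3 (mul_ne_zero hps h0)
    refine ⟨μ, h1, h2, Or.inr ⟨by omega, le_trans h2 ht, ?_⟩⟩
    by_contra hge
    push_neg at hge
    nlinarith [mul_pos hprev (neg_pos.mpr h3'), mul_nonneg (mul_self_nonneg (p s)) hge]

end Aux

section Main

variable {q n : ℕ} {φ : Fin n → ℕ → ℝ}

lemma backward (hn : 1 ≤ n) (hTZ : IsTZ q n φ) (f : ℕ → ℝ) (a : Fin n → ℝ)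
    (h : HasAlternance q n φ f a) : IsBestApprox q n φ f a := by
  obtain ⟨ν, hmono, hle, ε, hε, halt⟩ := h
  intro b
  by_contra hlt
  push_neg at hlt
  set E := normZ q (fun μ => poly n φ a μ - f μ) with hEdef
  have hEE : normZ q (fun ν => f ν - poly n φ a ν) = E :=
    normZ_congr (fun ν _ => abs_sub_comm _ _)
  rw [hEE] at hlt
  have hab : a ≠ b := by
    intro hh
    rw [hh] at hEE
    rw [hEE] at hlt
    exact lt_irrefl _ hlt
  have hε2 : ε * ε = 1 := by rcases hε with h | h <;> rw [h] <;> ring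
  -- positivity of alternate signs of r := poly (a - b)
  have hr : ∀ i : Fin (n+1), 0 < ε * (-1)^(i:ℕ) * (poly n φ (a-b) (ν i)) := by
    intro i
    have h1 := halt i
    have h2 : |f (ν i) - poly n φ b (ν i)| ≤ normZ q (fun ν => f ν - poly n φ b ν) :=
      abs_le_normZ (f := fun ν => f ν - poly n φ b ν) (hle i)
    have h3 : |f (ν i) - poly n φ b (ν i)| < E := lt_of_le_of_lt h2 hlt
    have h4 : poly n φ (a-b) (ν i) = (poly n φ a (ν i) - f (ν i)) +
        (f (ν i) - poly n φ b (ν i)) := by rw [poly_sub]; ring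
    rw [h4, mul_add, h1]
    have h5 : |ε * (-1)^(i:ℕ)| = 1 := by
      rw [abs_mul, abs_pow, abs_neg, abs_one, one_pow, mul_one]
      rcases hε with rfl | rfl <;> norm_num
    have h6 : ε * (-1)^(i:ℕ) * (f (ν i) - poly n φ b (ν i)) ≥
        -|f (ν i) - poly n φ b (ν i)| := by
      have := neg_abs_le (ε * (-1)^(i:ℕ) * (f (ν i) - poly n φ b (ν i)))
      rw [abs_mul, h5, one_mul] at this
      exact this
    linarith
  have hsign : ∀ i : Fin n,
      poly n φ (a-b) (ν i.castSucc) * poly n φ (a-b) (ν i.succ) < 0 := by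
    intro i
    have h1 := hr i.castSucc
    have h2 := hr i.succ
    have hc : ((i.castSucc : Fin (n+1)) : ℕ) = (i : ℕ) := rfl
    have hs : ((i.succ : Fin (n+1)) : ℕ) = (i : ℕ) + 1 := rfl
    rw [hc] at h1; rw [hs] at h2
    have hp2 : ((-1:ℝ))^(i:ℕ) * ((-1:ℝ))^(i:ℕ) = 1 := by
      rw [← pow_add, Even.neg_one_pow ⟨(i:ℕ), rfl⟩]
    have key := mul_pos h1 h2
    have hkey2 : (ε * (-1)^(i:ℕ) * poly n φ (a-b) (ν i.castSucc)) *
        (ε * (-1)^((i:ℕ)+1) * poly n φ (a-b) (ν i.succ)) =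
        -(poly n φ (a-b) (ν i.castSucc) * poly n φ (a-b) (ν i.succ)) := by
      rw [pow_succ]
      linear_combination (-(poly n φ (a-b) (ν i.castSucc) * poly n φ (a-b) (ν i.succ)) *
        (((-1:ℝ))^(i:ℕ) * ((-1:ℝ))^(i:ℕ))) * hε2 -
        (poly n φ (a-b) (ν i.castSucc) * poly n φ (a-b) (ν i.succ)) * hp2
    rw [hkey2] at key
    linarith
  choose μ hμ1 hμ2 hμ3 using fun i : Fin n =>
    exists_zero_between (hmono i.castSucc_lt_succ) (hle i.succ) (hsign i)
  have hinj : Function.Injective μ := by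
    have : StrictMono μ := by
      intro i j hij
      calc μ i ≤ ν i.succ := hμ2 i
        _ ≤ ν j.castSucc := hmono.monotone (by
            have hij' : (i:ℕ) < (j:ℕ) := hij
            rw [Fin.le_def, Fin.val_succ, Fin.coe_castSucc]
            omega)
        _ < μ j := hμ1 j
    exact this.injective
  exact no_n_zeros hn hTZ (sub_ne_zero.mpr hab) μ hinj hμ3

end Main


section Det

variable {q n : ℕ} {φ : Fin n → ℕ → ℝ}

/-- The interpolation matrix at `n` distinct points is nonsingular. -/
lemma det_ne_zero (hn : 1 ≤ n) (hTZ : IsTZ q n φ) {t : Fin n → ℕ}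
    (htinj : Function.Injective t) (htle : ∀ i, t i ≤ q) :
    (Matrix.of fun k i => φ k (t i)).det ≠ 0 := by
  intro h
  obtain ⟨v, hv0, hv⟩ := Matrix.exists_vecMul_eq_zero_iff.mpr h
  refine no_n_zeros hn hTZ hv0 t htinj (fun i => Or.inl ⟨htle i, ?_⟩)
  have := congrFun hv i
  simpa [Matrix.vecMul, dotProduct, poly] using this

/-- linearity of det in one column, expanded over the standard basis -/
lemma det_updateColumn_eq (M : Matrix (Fin n) (Fin n) ℝ) (j : Fin n) (v : Fin n → ℝ) :
    (M.updateCol j v).det =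
      ∑ k, v k * (M.updateCol j (Pi.single k 1)).det := by
  have key : ∀ s : Finset (Fin n),
      (M.updateCol j (∑ k ∈ s, v k • (Pi.single k 1 : Fin n → ℝ))).det =
      ∑ k ∈ s, v k * (M.updateCol j (Pi.single k 1)).det := by
    intro s
    induction s using Finset.induction with
    | empty =>
        simp only [Finset.sum_empty]
        have h0 : (0 : Fin n → ℝ) = (0:ℝ) • (0 : Fin n → ℝ) := by simp
        rw [h0, Matrix.det_updateCol_smul]
        simp
    | insert _ _ hx ih =>
        rw [Finset.sum_insert hx, Matrix.det_updateCol_add, Finset.sum_insert hx,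
          Matrix.det_updateCol_smul, ih]
  have hv : v = ∑ k, v k • (Pi.single k 1 : Fin n → ℝ) := by
    ext i
    simp [Pi.single_apply, Finset.sum_ite_eq, eq_comm]
  conv_lhs => rw [hv]
  exact key Finset.univ

end Det

section Indep

variable {q n : ℕ} {φ : Fin n → ℕ → ℝ}

/-- Any collection of at most `n` distinct columns is linearly independent. -/
lemma indep_points (hn : 1 ≤ n) (hnq : n ≤ q) (hTZ : IsTZ q n φ)
    {m : ℕ} (hm : m ≤ n) {t : Fin m → ℕ} (htinj : Function.Injective t)
    (htle : ∀ i, t i ≤ q) {c : Fin m → ℝ}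
    (hc : ∀ k, ∑ i, c i * φ k (t i) = 0) : c = 0 := by
  classical
  set S : Finset ℕ := Finset.image t Finset.univ with hSdef
  have hScard : S.card = m := by
    rw [hSdef, Finset.card_image_of_injective _ htinj, Finset.card_univ, Fintype.card_fin]
  have hSsub : S ⊆ Finset.range (q + 1) := by
    intro x hx
    rw [hSdef] at hx
    obtain ⟨j, _, rfl⟩ := Finset.mem_image.mp hx
    exact Finset.mem_range.mpr (Nat.lt_succ_of_le (htle j))
  obtain ⟨T, hST, hTsub, hTcard⟩ := Finset.exists_subsuperset_card_eq (n := n) hSsub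
    (by omega) (by rw [Finset.card_range]; omega)
  set u := T.orderEmbOfFin hTcard with hudef
  have huinj : Function.Injective u := u.injective
  have hule : ∀ i, u i ≤ q := fun i => by
    have := hTsub (Finset.orderEmbOfFin_mem T hTcard i)
    exact Nat.lt_succ_iff.mp (Finset.mem_range.mp this)
  have hTu : T = Finset.image u Finset.univ := by
    apply Finset.coe_injective
    rw [Finset.coe_image, Finset.coe_univ, Set.image_univ,
      Finset.range_orderEmbOfFin T hTcard]
  set w : ℕ → ℝ := fun x => if h : ∃ j, t j = x then c h.choose else 0 with hwdef
  have hwt : ∀ j, w (t j) = c j := by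
    intro j
    have hex : ∃ j', t j' = t j := ⟨j, rfl⟩
    have := hex.choose_spec
    simp only [hwdef, dif_pos hex]
    rw [htinj this]
  have hw0 : ∀ x, x ∉ S → w x = 0 := by
    intro x hx
    have hwx : w x = if h : ∃ j, t j = x then c h.choose else 0 := rfl
    rw [hwx, dif_neg]
    rintro ⟨j, rfl⟩
    exact hx (Finset.mem_image.mpr ⟨j, Finset.mem_univ j, rfl⟩)
  set d : Fin n → ℝ := fun i => w (u i) with hddef
  have hd : ∀ k, ∑ i, d i * φ k (u i) = 0 := by
    intro k
    have e1 : ∑ i, d i * φ k (u i) = ∑ x ∈ T, w x * φ k x := by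
      rw [hTu, Finset.sum_image (fun a _ b _ h => huinj h)]
    have e2 : ∑ x ∈ T, w x * φ k x = ∑ x ∈ S, w x * φ k x := by
      refine (Finset.sum_subset hST ?_).symm
      intro x _ hx
      rw [hw0 x hx, zero_mul]
    have e3 : ∑ x ∈ S, w x * φ k x = ∑ j, c j * φ k (t j) := by
      rw [hSdef, Finset.sum_image (fun a _ b _ h => htinj h)]
      exact Finset.sum_congr rfl fun j _ => by rw [hwt]
    rw [e1, e2, e3, hc]
  have hdet := det_ne_zero hn hTZ huinj hule
  have hd0 : d = 0 := by
    by_contra hd0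
    exact hdet (Matrix.exists_mulVec_eq_zero_iff.mp ⟨d, hd0, by
      ext k
      simpa [Matrix.mulVec, dotProduct, mul_comm] using hd k⟩)
  funext j
  have htj : t j ∈ T := hST (Finset.mem_image.mpr ⟨j, Finset.mem_univ j, rfl⟩)
  rw [hTu] at htj
  obtain ⟨i, _, hi⟩ := Finset.mem_image.mp htj
  have : c j = d i := by rw [hddef]; simp only []; rw [hi, hwt]
  rw [this, hd0]
  rfl

end Indep

section Perturb

variable {q n : ℕ} {φ : Fin n → ℕ → ℝ}

lemma poly_add_smul (a d : Fin n → ℝ) (θ : ℝ) (x : ℕ) :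
    poly n φ (a + θ • d) x = poly n φ a x + θ * poly n φ d x := by
  simp only [poly, Pi.add_apply, Pi.smul_apply, smul_eq_mul, add_mul, Finset.sum_add_distrib,
    Finset.mul_sum]
  ring_nf

/-- If there is a direction with strictly opposite sign at every extremal point, then
`poly a` is not a best approximant. -/
lemma perturb (f : ℕ → ℝ) (a d : Fin n → ℝ)
    (hE : 0 < normZ q (fun μ => poly n φ a μ - f μ))
    (h : ∀ ν, ν ≤ q → |poly n φ a ν - f ν| = normZ q (fun μ => poly n φ a μ - f μ) →
      (poly n φ a ν - f ν) * poly n φ d ν < 0) :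
    ¬ IsBestApprox q n φ f a := by
  classical
  intro hbest
  set e : ℕ → ℝ := fun ν => poly n φ a ν - f ν with hedef
  set E : ℝ := normZ q e with hEdef
  set r : ℕ → ℝ := poly n φ d with hrdef
  set R : ℝ := normZ q r with hRdef
  have hR0 : 0 ≤ R := normZ_nonneg r
  set E₂ : ℝ := (Finset.range (q + 1)).sup' (Finset.nonempty_range_iff.mpr q.succ_ne_zero)
    (fun ν => if |e ν| = E then 0 else |e ν|) with hE2def
  have hE2lt : E₂ < E := by
    rw [hE2def]
    rw [Finset.sup'_lt_iff]
    intro ν hν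
    by_cases hc : |e ν| = E
    · rw [if_pos hc]; exact hE
    · rw [if_neg hc]
      exact lt_of_le_of_ne (abs_le_normZ (Nat.lt_succ_iff.mp (Finset.mem_range.mp hν))) hc
  set θ : ℝ := min E (E - E₂) / (2 * (R + 1)) with hθdef
  have hθpos : 0 < θ := by
    apply div_pos
    · exact lt_min hE (by linarith)
    · linarith
  have hθR : ∀ ν, ν ≤ q → θ * |r ν| < min E (E - E₂) / 2 := by
    intro ν hν
    have h1 : |r ν| ≤ R := abs_le_normZ hν
    have h2 : θ * |r ν| ≤ θ * R := by
      apply mul_le_mul_of_nonneg_left h1 (le_of_lt hθpos)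
    have h3 : θ * R < θ * (R + 1) := by
      apply mul_lt_mul_of_pos_left (by linarith) hθpos
    have h4 : θ * (R + 1) = min E (E - E₂) / 2 := by
      rw [hθdef]; field_simp
    linarith
  have hkey : ∀ ν, ν ≤ q → |e ν + θ * r ν| < E := by
    intro ν hν
    have hmin1 : min E (E - E₂) ≤ E := min_le_left _ _
    have hmin2 : min E (E - E₂) ≤ E - E₂ := min_le_right _ _
    have hθr := hθR ν hν
    have habs : -|r ν| ≤ r ν ∧ r ν ≤ |r ν| := ⟨neg_abs_le _, le_abs_self _⟩
    by_cases hc : |e ν| = E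
    · have hsign : e ν * r ν < 0 := h ν hν hc
      rcases (abs_eq (le_of_lt hE)).mp hc with he | he
      · -- e ν = E > 0, so r ν < 0
        have hrneg : r ν < 0 := by nlinarith
        rw [abs_lt]
        constructor
        · nlinarith [abs_nonneg (r ν), neg_abs_le (r ν)]
        · nlinarith
      · have hrpos : 0 < r ν := by nlinarith
        rw [abs_lt]
        constructor
        · nlinarith
        · nlinarith [le_abs_self (r ν)]
    · have he2 : |e ν| ≤ E₂ := by
        rw [hE2def]
        have := Finset.le_sup' (fun ν => if |e ν| = E then 0 else |e ν|)
          (Finset.mem_range.mpr (Nat.lt_succ_of_le hν))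
        rw [if_neg hc] at this
        exact this
      calc |e ν + θ * r ν| ≤ |e ν| + |θ * r ν| := abs_add_le _ _
        _ = |e ν| + θ * |r ν| := by rw [abs_mul, abs_of_pos hθpos]
        _ < E₂ + (E - E₂) / 2 := by
            have : min E (E - E₂) / 2 ≤ (E - E₂)/2 := by linarith
            linarith
        _ < E := by linarith
  -- the competitor b := a + θ • d
  have hcomp := hbest (a + θ • d)
  have h1 : normZ q (fun ν => f ν - poly n φ (a + θ • d) ν) < E := by
    apply normZ_lt
    intro ν hν
    have : |f ν - poly n φ (a + θ • d) ν| = |e ν + θ * r ν| := by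
      rw [poly_add_smul, hedef, hrdef]
      rw [abs_sub_comm]
      congr 1
      simp only []
      ring
    rw [this]
    exact hkey ν hν
  have h2 : normZ q (fun ν => f ν - poly n φ a ν) = E := by
    rw [hEdef]
    exact normZ_congr (fun ν _ => abs_sub_comm _ _)
  rw [h2] at hcomp
  linarith

end Perturb

section Adjacent

variable {q n : ℕ} {φ : Fin n → ℕ → ℝ}

lemma succAbove_castSucc_val (j : Fin n) (i : Fin n) :
    (((Fin.castSucc j).succAbove i) : ℕ) = if (i:ℕ) < (j:ℕ) then (i:ℕ) else (i:ℕ)+1 := by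
  rcases lt_or_ge (i:ℕ) (j:ℕ) with h | h
  · rw [Fin.succAbove_of_castSucc_lt _ _ (by rw [Fin.lt_def]; simpa using h), if_pos h]
    rfl
  · rw [Fin.succAbove_of_le_castSucc _ _ (by rw [Fin.le_def]; simpa using h), if_neg (not_lt.mpr h)]
    rfl

lemma succAbove_succ_val (j : Fin n) (i : Fin n) :
    (((Fin.succ j).succAbove i) : ℕ) = if (i:ℕ) ≤ (j:ℕ) then (i:ℕ) else (i:ℕ)+1 := by
  rcases le_or_gt (i:ℕ) (j:ℕ) with h | h
  · rw [Fin.succAbove_of_castSucc_lt _ _ (by rw [Fin.lt_def]; simpa using Nat.lt_succ_of_le h),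
      if_pos h]
    rfl
  · rw [Fin.succAbove_of_le_castSucc _ _ (by rw [Fin.le_def]; simpa using h),
      if_neg (not_le.mpr h)]
    rfl

/-- Adjacent maximal minors of a `T_ℤ`-system matrix have the same sign. -/
lemma det_adjacent (hn : 1 ≤ n) (hTZ : IsTZ q n φ) {μ : Fin (n+1) → ℕ}
    (hmono : StrictMono μ) (hle : ∀ j, μ j ≤ q) (j : Fin n) :
    0 < (Matrix.of fun k i => φ k (μ ((Fin.castSucc j).succAbove i))).det *
        (Matrix.of fun k i => φ k (μ ((Fin.succ j).succAbove i))).det := by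
  classical
  set pts : Fin n → ℕ := fun i => μ ((Fin.castSucc j).succAbove i) with hptsdef
  set Mb : Matrix (Fin n) (Fin n) ℝ := Matrix.of fun k i => φ k (pts i) with hMbdef
  set u : ℕ → ℝ := fun x => (Mb.updateCol j (fun k => φ k x)).det with hudef
  set cc : Fin n → ℝ := fun k => (Mb.updateCol j (Pi.single k 1)).det with hccdef
  have hu : ∀ x, u x = poly n φ cc x := by
    intro x
    rw [hudef]
    simp only []
    rw [det_updateColumn_eq]
    exact Finset.sum_congr rfl fun k _ => mul_comm _ _
  -- basic point facts
  have hptsj : pts j = μ (Fin.succ j) := by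
    rw [hptsdef]
    simp only []
    congr 1
    apply Fin.val_injective
    rw [succAbove_castSucc_val]
    simp
  have hptslt : ∀ i : Fin n, (i:ℕ) < (j:ℕ) → pts i < μ (Fin.castSucc j) := by
    intro i h
    apply hmono
    rw [Fin.lt_def, succAbove_castSucc_val, if_pos h]
    simpa using h
  have hptsgt : ∀ i : Fin n, (j:ℕ) < (i:ℕ) → μ (Fin.succ j) < pts i := by
    intro i h
    apply hmono
    rw [Fin.lt_def, succAbove_castSucc_val, if_neg (by omega)]
    simp only [Fin.val_succ]
    omega
  have hptsle : ∀ i, pts i ≤ q := fun i => hle _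
  have hmolt : μ (Fin.castSucc j) < μ (Fin.succ j) := hmono j.castSucc_lt_succ
  -- u at the two endpoints
  have huA : u (μ (Fin.succ j)) = (Matrix.of fun k i => φ k (pts i)).det := by
    rw [hudef]
    simp only []
    congr 1
    rw [← hptsj]
    have : (fun k => φ k (pts j)) = fun k => Mb k j := by
      funext k; rw [hMbdef]; rfl
    rw [this, Matrix.updateCol_eq_self]
  have huB : u (μ (Fin.castSucc j)) =
      (Matrix.of fun k i => φ k (μ ((Fin.succ j).succAbove i))).det := by
    rw [hudef]
    simp only []
    congr 1
    ext k i
    rw [Matrix.updateCol_apply]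
    by_cases hij : i = j
    · subst hij
      rw [if_pos rfl]
      congr 2
      apply Fin.val_injective
      rw [succAbove_succ_val, if_pos le_rfl]
      simp
    · rw [if_neg hij]
      show Mb k i = φ k (μ ((Fin.succ j).succAbove i))
      rw [hMbdef]
      show φ k (pts i) = _
      have hfe : (Fin.castSucc j).succAbove i = (Fin.succ j).succAbove i := by
        apply Fin.val_injective
        rw [succAbove_castSucc_val, succAbove_succ_val]
        have hvne : (i:ℕ) ≠ (j:ℕ) := fun h => hij (Fin.val_injective h)
        rcases lt_or_gt_of_ne hvne with h | h
        · rw [if_pos h, if_pos (le_of_lt h)]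
        · rw [if_neg (by omega), if_neg (by omega)]
      rw [hptsdef]
      simp only []
      rw [hfe]
  -- nonvanishing of the two dets
  have hinjc : Function.Injective (fun i => μ ((Fin.castSucc j).succAbove i)) :=
    fun i i' h => Fin.succAbove_right_injective (hmono.injective h)
  have hinjs : Function.Injective (fun i => μ ((Fin.succ j).succAbove i)) :=
    fun i i' h => Fin.succAbove_right_injective (hmono.injective h)
  have hdetc : (Matrix.of fun k i => φ k (μ ((Fin.castSucc j).succAbove i))).det ≠ 0 :=
    det_ne_zero hn hTZ hinjc (fun i => hle _)
  have hdets : (Matrix.of fun k i => φ k (μ ((Fin.succ j).succAbove i))).det ≠ 0 :=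
    det_ne_zero hn hTZ hinjs (fun i => hle _)
  -- cc is nontrivial
  have hcc0 : cc ≠ 0 := by
    intro h
    apply hdetc
    rw [← huA, hu, h]
    simp [poly]
  -- zeros of u at the fixed points
  have hzero : ∀ i : Fin n, i ≠ j → poly n φ cc (pts i) = 0 := by
    intro i hij
    rw [← hu]
    rw [hudef]
    simp only []
    apply Matrix.det_zero_of_column_eq hij
    intro k
    rw [Matrix.updateCol_apply, if_neg hij, Matrix.updateCol_apply, if_pos rfl]
    rfl
  have hxneq : ∀ x : ℕ, μ (Fin.castSucc j) ≤ x → x ≤ μ (Fin.succ j) →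
      ∀ i : Fin n, i ≠ j → pts i ≠ x := by
    intro x hx1 hx2 i hij
    have hvne : (i:ℕ) ≠ (j:ℕ) := fun h => hij (Fin.val_injective h)
    rcases lt_or_gt_of_ne hvne with h | h
    · have := hptslt i h; omega
    · have := hptsgt i h; omega
  have hptsinj : Function.Injective pts := hinjc
  -- the extra-zero contradiction machine
  have hext : ∀ x : ℕ, μ (Fin.castSucc j) ≤ x → x ≤ μ (Fin.succ j) →
      IsZero q (poly n φ cc) x → False := by
    intro x hx1 hx2 hxz
    set tt : Fin n → ℕ := fun i => if i = j then x else pts i with httdef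
    have htt : Function.Injective tt := by
      intro i i' h
      rw [httdef] at h
      simp only [] at h
      by_cases hi : i = j <;> by_cases hi' : i' = j
      · rw [hi, hi']
      · rw [if_pos hi, if_neg hi'] at h
        exact absurd h.symm (hxneq x hx1 hx2 i' hi')
      · rw [if_neg hi, if_pos hi'] at h
        exact absurd h (hxneq x hx1 hx2 i hi)
      · rw [if_neg hi, if_neg hi'] at h
        exact hptsinj h
    apply no_n_zeros hn hTZ hcc0 tt htt
    intro i
    rw [httdef]
    simp only []
    by_cases hi : i = j
    · rw [if_pos hi]; exact hxz
    · rw [if_neg hi]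
      exact Or.inl ⟨hptsle i, hzero i hi⟩
  have hne : ∀ x, μ (Fin.castSucc j) ≤ x → x ≤ μ (Fin.succ j) → poly n φ cc x ≠ 0 :=
    fun x h1 h2 h0 => hext x h1 h2 (Or.inl ⟨le_trans h2 (hle _), h0⟩)
  have hnochange : ∀ x, μ (Fin.castSucc j) ≤ x → x + 1 ≤ μ (Fin.succ j) →
      ¬(poly n φ cc x * poly n φ cc (x+1) < 0) := by
    intro x h1 h2 hc
    refine hext (x+1) (by omega) h2 (Or.inr ⟨by omega, le_trans h2 (hle _), ?_⟩)
    simpa using hc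
  have hchain : ∀ x (hx : μ (Fin.castSucc j) ≤ x), x ≤ μ (Fin.succ j) →
      0 < poly n φ cc (μ (Fin.castSucc j)) * poly n φ cc x := by
    intro x hx
    induction x, hx using Nat.le_induction with
    | base =>
        intro _
        exact mul_self_pos.mpr (hne _ le_rfl (le_of_lt hmolt))
    | succ x hx ih =>
        intro hx2
        have hxle : x ≤ μ (Fin.succ j) := by omega
        have h1 := ih hxle
        have h2 : 0 < poly n φ cc x * poly n φ cc (x+1) := by
          rcases lt_or_eq_of_le (not_lt.mp (hnochange x hx hx2)) with h | h
          · exact h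
          · exact absurd h.symm
              (mul_ne_zero (hne x hx hxle) (hne (x+1) (by omega) hx2))
        by_contra h3
        push_neg at h3
        nlinarith [mul_pos h1 h2,
          mul_nonneg (mul_self_nonneg (poly n φ cc x)) (neg_nonneg.mpr h3)]
  have hfin := hchain (μ (Fin.succ j)) (le_of_lt hmolt) le_rfl
  rw [hu] at huA
  rw [hu] at huB
  have h1 : Mb.det = poly n φ cc (μ (Fin.succ j)) := by rw [hMbdef]; exact huA.symm
  have h2 : (Matrix.of fun k i => φ k (μ ((Fin.succ j).succAbove i))).det =
      poly n φ cc (μ (Fin.castSucc j)) := huB.symm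
  rw [h1, h2, mul_comm]
  exact hfin

end Adjacent

section Kernel

variable {q n : ℕ} {φ : Fin n → ℕ → ℝ}

/-- All maximal minors (with a point deleted) have the same sign. -/
lemma det_all_sign (hn : 1 ≤ n) (hTZ : IsTZ q n φ) {μ : Fin (n+1) → ℕ}
    (hmono : StrictMono μ) (hle : ∀ j, μ j ≤ q) (jj : Fin (n+1)) :
    0 < (Matrix.of fun k i => φ k (μ ((0 : Fin (n+1)).succAbove i))).det *
        (Matrix.of fun k i => φ k (μ (jj.succAbove i))).det := by
  induction jj using Fin.induction with
  | zero =>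
      apply mul_self_pos.mpr
      exact det_ne_zero hn hTZ
        (fun i i' h => Fin.succAbove_right_injective (hmono.injective h)) (fun i => hle _)
  | succ j ih =>
      have h2 := det_adjacent hn hTZ hmono hle j
      by_contra h3
      push_neg at h3
      nlinarith [mul_pos ih h2,
        mul_nonneg (mul_self_nonneg ((Matrix.of fun k i => φ k (μ ((Fin.castSucc j).succAbove i))).det))
          (neg_nonneg.mpr h3)]

/-- The alternating-minors vector lies in the kernel of the `n × (n+1)` collocation matrix. -/
lemma minor_kernel (μ : Fin (n+1) → ℕ) (k : Fin n) :
    ∑ jj : Fin (n+1), (-1 : ℝ)^(jj:ℕ) *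
      (Matrix.of fun k' i => φ k' (μ (jj.succAbove i))).det * φ k (μ jj) = 0 := by
  classical
  set B : Matrix (Fin (n+1)) (Fin (n+1)) ℝ :=
    Matrix.of fun i jj => Fin.cases (φ k (μ jj)) (fun i' => φ i' (μ jj)) i with hBdef
  have hB0 : B.det = 0 := by
    apply Matrix.det_zero_of_row_eq (Fin.succ_ne_zero k).symm
    funext jj
    rw [hBdef]
    simp [Matrix.of_apply]
  rw [Matrix.det_succ_row_zero] at hB0
  rw [← hB0]
  apply Finset.sum_congr rfl
  intro jj _
  have hB0j : B 0 jj = φ k (μ jj) := by rw [hBdef]; simp [Matrix.of_apply]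
  have hsub : B.submatrix Fin.succ jj.succAbove =
      Matrix.of fun k' i => φ k' (μ (jj.succAbove i)) := by
    ext k' i
    rw [Matrix.submatrix_apply, hBdef]
    simp [Matrix.of_apply]
  rw [hB0j, hsub]
  ring

end Kernel

section Forward

variable {q n : ℕ} {φ : Fin n → ℕ → ℝ}

lemma pi_single_expand (v : Fin n → ℝ) : v = ∑ k, v k • (Pi.single k 1 : Fin n → ℝ) := by
  ext i
  simp [Pi.single_apply, eq_comm]

lemma forward (hn : 1 ≤ n) (hnq : n ≤ q) (hTZ : IsTZ q n φ) (f : ℕ → ℝ) (a : Fin n → ℝ)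
    (hbest : IsBestApprox q n φ f a) : HasAlternance q n φ f a := by
  classical
  set e : ℕ → ℝ := fun ν => poly n φ a ν - f ν with hedef
  set E : ℝ := normZ q e with hEdef
  rcases eq_or_lt_of_le (normZ_nonneg (q := q) e) with hE0 | hEpos
  · -- E = 0 : the error vanishes identically
    refine ⟨fun i => (i : ℕ), fun i j hij => hij,
      fun i => le_trans (Nat.lt_succ_iff.mp i.isLt) hnq, 1, Or.inl rfl, ?_⟩
    intro i
    have hiq : (i:ℕ) ≤ q := le_trans (Nat.lt_succ_iff.mp i.isLt) hnq
    have h1 : |e (i:ℕ)| ≤ E := abs_le_normZ hiq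
    have h2 : e (i:ℕ) = 0 := by
      rw [← abs_eq_zero]
      have := abs_nonneg (e (i:ℕ))
      linarith [h1, hE0.symm ▸ (le_refl (0:ℝ))]
    show (1:ℝ) * (-1)^(i:ℕ) * (e (i:ℕ)) = E
    rw [h2, hEdef, ← hE0]
    ring
  · -- E > 0
    set X : Set ℕ := {ν | ν ≤ q ∧ |e ν| = E} with hXdef
    set g : ℕ → (Fin n → ℝ) := fun ν => e ν • (fun k => φ k ν) with hgdef
    have hXfin : (g '' X).Finite := ((Set.finite_Iic q).subset (fun ν hν => hν.1)).image g
    have hhull : (0 : Fin n → ℝ) ∈ convexHull ℝ (g '' X) := by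
      by_contra h0
      obtain ⟨L, u0, hL0, hLb⟩ := geometric_hahn_banach_point_closed
        (convex_convexHull ℝ (g '' X)) (hXfin.isClosed_convexHull (𝕜 := ℝ)) h0
      have hu : (0:ℝ) < u0 := by simpa using hL0
      refine perturb f a (fun k => - L (Pi.single k 1)) hEpos ?_ hbest
      intro ν hν habs
      have hmem : g ν ∈ convexHull ℝ (g '' X) :=
        subset_convexHull ℝ _ ⟨ν, ⟨hν, habs⟩, rfl⟩
      have hLg : u0 < L (g ν) := hLb _ hmem
      have hpoly : poly n φ (fun k => - L (Pi.single k 1)) ν = - L (fun k => φ k ν) := by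
        have hexp : (fun k => φ k ν) = ∑ k, φ k ν • (Pi.single k 1 : Fin n → ℝ) :=
          pi_single_expand _
        rw [hexp, map_sum]
        show (∑ k, (- L (Pi.single k 1)) * φ k ν) =
          - ∑ k, L (φ k ν • (Pi.single k 1 : Fin n → ℝ))
        rw [← Finset.sum_neg_distrib]
        apply Finset.sum_congr rfl
        intro k _
        rw [map_smul]
        simp only [smul_eq_mul]
        ring
      have hcalc : (poly n φ a ν - f ν) * poly n φ (fun k => - L (Pi.single k 1)) ν
          = - L (g ν) := by
        rw [hpoly]
        show e ν * - L (fun k => φ k ν) = - L (e ν • fun k => φ k ν)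
        rw [map_smul]
        simp only [smul_eq_mul]
        ring
      rw [hcalc]
      linarith
    obtain ⟨ι, hfin, z, w, hzs, hai, hwpos, hw1, hwz⟩ :=
      eq_pos_convex_span_of_mem_convexHull hhull
    letI := hfin
    have hw1b : ∑ i : ι, w i = 1 := hw1
    have hwzb : ∑ i : ι, w i • z i = 0 := hwz
    have hcard_le : Fintype.card ι ≤ n + 1 := by
      have h1 := hai.card_le_finrank_succ
      have h2 : Module.finrank ℝ (vectorSpan ℝ (Set.range z)) ≤ Module.finrank ℝ (Fin n → ℝ) :=
        Submodule.finrank_le _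
      rw [Module.finrank_fin_fun] at h2
      omega
    have hz' : ∀ i : ι, ∃ ν, (ν ≤ q ∧ |e ν| = E) ∧ g ν = z i := by
      intro i
      obtain ⟨ν, hν, hgν⟩ := hzs ⟨i, rfl⟩
      exact ⟨ν, hν, hgν⟩
    choose t ht hgt using hz'
    have htinj : Function.Injective t := by
      intro i i' h
      apply hai.injective
      rw [← hgt i, ← hgt i', h]
    have heX : ∀ i, e (t i) ≠ 0 := by
      intro i h
      have h2 := (ht i).2
      rw [h, abs_zero] at h2
      exact absurd h2.symm (ne_of_gt hEpos)
    have hwz' : ∀ k : Fin n, ∑ i : ι, w i * e (t i) * φ k (t i) = 0 := by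
      intro k
      have h1 := congrFun hwzb k
      simp only [Finset.sum_apply, Pi.zero_apply, Pi.smul_apply, smul_eq_mul] at h1
      rw [← h1]
      refine Finset.sum_congr rfl fun i _ => ?_
      rw [← hgt i]
      show w i * e (t i) * φ k (t i) = w i * (e (t i) • fun k' => φ k' (t i)) k
      simp only [Pi.smul_apply, smul_eq_mul]
      ring
    have hcard_ge : n + 1 ≤ Fintype.card ι := by
      by_contra hlt
      push_neg at hlt
      have hmle : Fintype.card ι ≤ n := by omega
      set eqv := (Fintype.equivFin ι).symm with heqvdef
      have h0 := indep_points hn hnq hTZ (m := Fintype.card ι) hmle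
        (t := t ∘ eqv) (htinj.comp eqv.injective)
        (fun i => (ht (eqv i)).1)
        (c := fun i => w (eqv i) * e (t (eqv i)))
        (by
          intro k
          exact (Equiv.sum_comp eqv
            (fun i => w i * e (t i) * φ k (t i))).trans (hwz' k))
      have hne : Nonempty ι := by
        by_contra hni
        rw [not_nonempty_iff] at hni
        have h10 : (1:ℝ) = 0 := by
          rw [← hw1b]
          exact Finset.sum_eq_zero (fun i _ => (hni.false i).elim)
        norm_num at h10
      obtain ⟨i0⟩ := hne
      have hc0 := congrFun h0 (eqv.symm i0)
      simp only [Equiv.apply_symm_apply, Pi.zero_apply] at hc0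
      exact (mul_ne_zero (ne_of_gt (hwpos i0)) (heX i0)) hc0
    have hcard : Fintype.card ι = n + 1 := le_antisymm hcard_le hcard_ge
    set T : Finset ℕ := Finset.image t Finset.univ with hTdef
    have hTcard : T.card = n + 1 := by
      rw [hTdef, Finset.card_image_of_injective _ htinj, Finset.card_univ, hcard]
    set μ : Fin (n+1) → ℕ := fun j => T.orderEmbOfFin hTcard j with hμdef
    have hμmono : StrictMono μ := (T.orderEmbOfFin hTcard).strictMono
    have hz2 : ∀ j, ∃ i : ι, t i = μ j := by
      intro j
      obtain ⟨i, _, hi⟩ := Finset.mem_image.mp (Finset.orderEmbOfFin_mem T hTcard j)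
      exact ⟨i, hi⟩
    choose ρ hρ using hz2
    have hρinj : Function.Injective ρ := by
      intro j j' h
      apply hμmono.injective
      rw [← hρ j, ← hρ j', h]
    have hρbij : Function.Bijective ρ :=
      (Fintype.bijective_iff_injective_and_card ρ).mpr
        ⟨hρinj, by rw [Fintype.card_fin, hcard]⟩
    have hμle : ∀ j, μ j ≤ q := fun j => by rw [← hρ j]; exact (ht (ρ j)).1
    have hμE : ∀ j, |e (μ j)| = E := fun j => by rw [← hρ j]; exact (ht (ρ j)).2
    have hker : ∀ k : Fin n, ∑ j : Fin (n+1), (w (ρ j) * e (μ j)) * φ k (μ j) = 0 := by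
      intro k
      rw [← hwz' k]
      apply Fintype.sum_bijective ρ hρbij
      intro j
      rw [← hρ j]
    set D : Fin (n+1) → ℝ :=
      fun j => (Matrix.of fun k i => φ k (μ (j.succAbove i))).det with hDdef
    have hDne : ∀ j, D j ≠ 0 := fun j => det_ne_zero hn hTZ
      (fun i i' h => Fin.succAbove_right_injective (hμmono.injective h)) (fun i => hμle _)
    have hDsign : ∀ j, 0 < D 0 * D j := fun j => det_all_sign hn hTZ hμmono hμle j
    have hWker : ∀ k : Fin n, ∑ j : Fin (n+1), (-1:ℝ)^(j:ℕ) * D j * φ k (μ j) = 0 :=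
      fun k => minor_kernel μ k
    set v : Fin (n+1) → ℝ :=
      fun j => D 0 * (w (ρ j) * e (μ j)) -
        (w (ρ 0) * e (μ 0)) * ((-1:ℝ)^(j:ℕ) * D j) with hvdef
    have hv0 : v 0 = 0 := by
      show D 0 * (w (ρ 0) * e (μ 0)) -
        (w (ρ 0) * e (μ 0)) * ((-1:ℝ)^((0 : Fin (n+1)):ℕ) * D 0) = 0
      simp only [Fin.val_zero, pow_zero, one_mul]
      ring
    have hvker : ∀ k, ∑ j, v j * φ k (μ j) = 0 := by
      intro k
      have hterm : ∀ j : Fin (n+1), v j * φ k (μ j)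
          = D 0 * ((w (ρ j) * e (μ j)) * φ k (μ j)) -
            (w (ρ 0) * e (μ 0)) * ((-1:ℝ)^(j:ℕ) * D j * φ k (μ j)) := by
        intro j
        show (D 0 * (w (ρ j) * e (μ j)) -
          (w (ρ 0) * e (μ 0)) * ((-1:ℝ)^(j:ℕ) * D j)) * φ k (μ j) = _
        ring
      rw [Finset.sum_congr rfl (fun j _ => hterm j), Finset.sum_sub_distrib,
        ← Finset.mul_sum, ← Finset.mul_sum, hker, hWker, mul_zero, mul_zero, sub_zero]
    have hvz : ∀ j, v j = 0 := by
      have h0 := indep_points hn hnq hTZ (m := n) le_rfl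
        (t := fun i : Fin n => μ i.succ)
        (fun i i' h => Fin.succ_injective _ (hμmono.injective h))
        (fun i => hμle _)
        (c := fun i => v i.succ)
        (by
          intro k
          have h1 := hvker k
          rw [Fin.sum_univ_succ, hv0, zero_mul, zero_add] at h1
          exact h1)
      intro j
      induction j using Fin.cases with
      | zero => exact hv0
      | succ i =>
          have := congrFun h0 i
          simpa using this
    set ε : ℝ := if 0 < e (μ 0) then 1 else -1 with hεdef
    have hεval : ε = 1 ∨ ε = -1 := by
      rw [hεdef]; split_ifs; exacts [Or.inl rfl, Or.inr rfl]
    have he0ne : e (μ 0) ≠ 0 := by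
      rw [← hρ 0]; exact heX (ρ 0)
    have he0 : e (μ 0) = ε * E := by
      rw [hεdef]
      split_ifs with h
      · rw [one_mul, ← hμE 0, abs_of_pos h]
      · push_neg at h
        have : e (μ 0) < 0 := lt_of_le_of_ne h he0ne
        rw [← hμE 0, abs_of_neg this]
        ring
    refine ⟨μ, hμmono, hμle, ε, hεval, ?_⟩
    intro j
    show ε * (-1)^(j:ℕ) * e (μ j) = E
    have hprop0 : D 0 * (w (ρ j) * e (μ j)) -
        (w (ρ 0) * e (μ 0)) * ((-1:ℝ)^(j:ℕ) * D j) = 0 := hvz j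
    have hprop' : D 0 * (w (ρ j) * e (μ j)) =
        (w (ρ 0) * e (μ 0)) * ((-1:ℝ)^(j:ℕ) * D j) := by linarith
    have hs2 : ((-1:ℝ))^(j:ℕ) * ((-1:ℝ))^(j:ℕ) = 1 := by
      rw [← pow_add, Even.neg_one_pow ⟨(j:ℕ), rfl⟩]
    have hw0 := hwpos (ρ 0)
    have hwj := hwpos (ρ j)
    have key : (D 0 * D 0) * (w (ρ j)) * (e (μ 0) * ((-1:ℝ)^(j:ℕ) * e (μ j)))
        = (w (ρ 0)) * (e (μ 0) * e (μ 0)) * (D 0 * D j) := by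
      linear_combination (D 0 * e (μ 0) * (-1:ℝ)^(j:ℕ)) * hprop' +
        (w (ρ 0) * e (μ 0) * e (μ 0) * D 0 * D j) * hs2
    have hpos1 : 0 < (w (ρ 0)) * (e (μ 0) * e (μ 0)) * (D 0 * D j) :=
      mul_pos (mul_pos hw0 (mul_self_pos.mpr he0ne)) (hDsign j)
    have hC : 0 < (D 0 * D 0) * (w (ρ j)) := mul_pos (mul_self_pos.mpr (hDne 0)) hwj
    have hkey2 : 0 < e (μ 0) * ((-1:ℝ)^(j:ℕ) * e (μ j)) := by
      by_contra h3
      push_neg at h3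
      nlinarith [key, hpos1, mul_nonneg hC.le (neg_nonneg.mpr h3)]
    have h6 : 0 < ε * ((-1:ℝ)^(j:ℕ) * e (μ j)) := by
      rw [he0] at hkey2
      rcases hεval with h | h <;> rw [h] at hkey2 ⊢ <;>
        (by_contra h3; push_neg at h3; nlinarith [hkey2, h3, hEpos])
    have h7 : |ε * ((-1:ℝ)^(j:ℕ) * e (μ j))| = E := by
      rw [abs_mul, abs_mul, abs_pow, abs_neg, abs_one, one_pow, one_mul, hμE j]
      rcases hεval with h | h <;> rw [h] <;> norm_num
    calc ε * (-1:ℝ)^(j:ℕ) * e (μ j) = ε * ((-1:ℝ)^(j:ℕ) * e (μ j)) := by ring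
      _ = |ε * ((-1:ℝ)^(j:ℕ) * e (μ j))| := (abs_of_pos h6).symm
      _ = E := h7

end Forward


/-- Let `{φₖ}ₖ₌₁ⁿ ⊂ C[0,q]_ℤ` (linearly independent, `1 ≤ n ≤ q`) be a
`T_ℤ`-system. A polynomial `p* ∈ L_n` is a best uniform approximant of `f ∈ C[0,q]_ℤ`
iff `p*` admits an alternance set of length `n+1`. -/
theorem stmt_5 (q n : ℕ) (hn : 1 ≤ n) (hnq : n ≤ q)
    (φ : Fin n → ℕ → ℝ) (hli : LinIndepOn q n φ) (hTZ : IsTZ q n φ)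
    (f : ℕ → ℝ) (a : Fin n → ℝ) :
    IsBestApprox q n φ f a ↔ HasAlternance q n φ f a :=
  ⟨fun h => forward hn hnq hTZ f a h, fun h => backward hn hTZ f a h⟩

end DiscPaper
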